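/- Let K be a (commutative) semifield and let p : ℕ be nonzero with p • (1 : K) + 1 = 1. Then either 1 + 1 = (1 : K) (so K is an idempotent semifield), or p • (1 : K) = 0 (so K is a field of characteristic dividing p). -/

import Mathlib

theorem semifield_nonzero_char {K : Type*} [Semifield K] (p : ℕ) (hp : p ≠ 0)
    (h : p • (1 : K) + 1 = 1) :
    (1 : K) + 1 = 1 ∨ p • (1 : K) = 0 := by
  by_cases ha : p • (1 : K) = 0
  · exact Or.inr ha
  · left
    have hcast : p • (1 : K) = (p : K) := by
      rw [nsmul_eq_mul, mul_one]
    rw [hcast] at h ha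
    -- h : (p:K) + 1 = 1, ha : (p:K) ≠ 0
    obtain ⟨q, rfl⟩ : ∃ q, p = q + 1 := ⟨p - 1, (Nat.succ_pred_eq_of_pos hp.bot_lt).symm⟩
    set p := q + 1 with hpdef
    -- periodicity: for n ≥ 1, (n + p : K) = (n : K)
    have per : ∀ m : ℕ, ((m + 1 + p : ℕ) : K) = ((m + 1 : ℕ) : K) := by
      intro m
      have h' := h
      push_cast at h' ⊢
      rw [show (m:K) + 1 + (p:K) = (m:K) + ((p:K) + 1) from by ring, h', ]
    have key : ∀ k : ℕ, ((p + k * p : ℕ) : K) = (p : K) := by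
      intro k
      induction k with
      | zero => simp
      | succ k ih =>
        have h1 : p + (k + 1) * p = (q + k * p) + 1 + p := by ring
        have h2 : q + k * p + 1 = p + k * p := by ring
        rw [h1, per (q + k * p), h2, ih]
    have hpp : ((p * p : ℕ) : K) = (p : K) := by
      have : p * p = p + q * p := by ring
      rw [this, key q]
    rw [Nat.cast_mul] at hpp
    have hp1 : (p : K) = 1 := by
      have := mul_right_cancel₀ ha (hpp.trans (one_mul (p : K)).symm)
      exact this
    rw [hp1] at h
    exact h
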